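/- Let V be a scanning function that is g-filling for a function g : ℕ → ℕ. Let w be a bit string of length n and let t be a natural number with t ≥ g(n). Then the number of bit strings α of length t with α ∼_V w is exactly 2^(t−n). -/

import Mathlib

open Filter


/-- A scanning function: the next query is never a repetition of an earlier query. -/
def IsScanning (V : List Bool → ℕ) : Prop :=
  ∀ α : List Bool, ∀ i < α.length, V α ≠ V (α.take i)

/-- `V` is `g`-filling: along any run of length `g n`, every position `r < n` is queried. -/
def IsFilling (V : List Bool → ℕ) (g : ℕ → ℕ) : Prop :=
  ∀ n : ℕ, ∀ α : List Bool, α.length = g n → ∀ r < n, ∃ i < g n, V (α.take i) = r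

/-- The first `i` bits of the sequence `Z ∘ V`. -/
def scanList (Z : ℕ → Bool) (V : List Bool → ℕ) : ℕ → List Bool
  | 0 => []
  | n + 1 => scanList Z V n ++ [Z (V (scanList Z V n))]

/-- The sequence `Y = Z ∘ V`, defined recursively by `Y i = Z (V (Y↾i))`. -/
def scanSeq (Z : ℕ → Bool) (V : List Bool → ℕ) (i : ℕ) : Bool :=
  Z (V (scanList Z V i))

/-- `α ∼_V w`: the run `α` is consistent with the string `w`, i.e. every query made
along `α` that falls inside `w` is answered according to `w`. -/
def ConsistentWith (V : List Bool → ℕ) (α w : List Bool) : Prop :=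
  ∀ j < α.length, V (α.take j) < w.length → w.getD (V (α.take j)) false = α.getD j false

open Classical in
/-- The set of positions `r < |w|` queried along `β`. -/
noncomputable def QsetCR (V : List Bool → ℕ) (w : List Bool) (β : List Bool) : Finset ℕ :=
  (Finset.range w.length).filter (fun r => ∃ i < β.length, V (β.take i) = r)

section AuxCR

variable {V : List Bool → ℕ} {w : List Bool}

lemma mem_QsetCR {β : List Bool} {r : ℕ} :
    r ∈ QsetCR V w β ↔ r < w.length ∧ ∃ i < β.length, V (β.take i) = r := by
  classical
  simp [QsetCR]

lemma scan_neCR (hV : IsScanning V) {α : List Bool} {i j : ℕ} (hij : i < j)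
    (hj : j ≤ α.length) : V (α.take i) ≠ V (α.take j) := by
  have h := hV (α.take j) i (by rw [List.length_take]; omega)
  rw [List.take_take, min_eq_left hij.le] at h
  exact fun e => h e.symm

lemma QsetCR_subset {β : List Bool} : QsetCR V w β ⊆ Finset.range w.length := by
  intro r hr
  simp [Finset.mem_range, (mem_QsetCR.mp hr).1]

lemma QsetCR_snoc (β : List Bool) (b : Bool) :
    QsetCR V w (β ++ [b]) =
      if V β < w.length then insert (V β) (QsetCR V w β) else QsetCR V w β := by
  have htake : ∀ i ≤ β.length, (β ++ [b]).take i = β.take i := fun i hi =>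
    List.take_append_of_le_length hi
  ext r
  rw [mem_QsetCR]
  have key : (r < w.length ∧ ∃ i < (β ++ [b]).length, V ((β ++ [b]).take i) = r)
      ↔ (r < w.length ∧ (V β = r ∨ ∃ i < β.length, V (β.take i) = r)) := by
    constructor
    · rintro ⟨h1, i, hi, h2⟩
      refine ⟨h1, ?_⟩
      simp only [List.length_append, List.length_singleton] at hi
      rcases Nat.lt_or_ge i β.length with h | h
      · exact Or.inr ⟨i, h, by rwa [htake i h.le] at h2⟩
      · have : i = β.length := by omega
        subst this
        rw [htake _ le_rfl, List.take_length] at h2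
        exact Or.inl h2
    · rintro ⟨h1, h2 | ⟨i, hi, h2⟩⟩
      · exact ⟨h1, β.length, by simp, by rw [htake _ le_rfl, List.take_length]; exact h2⟩
      · exact ⟨h1, i, by simp; omega, by rwa [htake i hi.le]⟩
  rw [key]
  by_cases h : V β < w.length
  · simp only [h, if_pos, Finset.mem_insert, mem_QsetCR]
    constructor
    · rintro ⟨h1, h2 | h2⟩
      · exact Or.inl h2.symm
      · exact Or.inr ⟨h1, h2⟩
    · rintro (h2 | ⟨h1, h2⟩)
      · exact ⟨h2 ▸ h, Or.inl h2.symm⟩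
      · exact ⟨h1, Or.inr h2⟩
  · simp only [h, if_neg, mem_QsetCR, not_false_iff]
    constructor
    · rintro ⟨h1, h2 | h2⟩
      · omega
      · exact ⟨h1, h2⟩
    · rintro ⟨h1, h2⟩; exact ⟨h1, Or.inr h2⟩

lemma cw_prefixCR {β γ : List Bool} (h : ConsistentWith V (β ++ γ) w) :
    ConsistentWith V β w := by
  intro j hj hlt
  have ht : (β ++ γ).take j = β.take j := List.take_append_of_le_length hj.le
  have hj' : j < (β ++ γ).length := by simp; omega
  have := h j hj' (by rwa [ht])
  rw [ht, List.getD_append _ _ _ _ hj] at this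
  exact this

lemma cw_snocCR {β : List Bool} (hβ : ConsistentWith V β w) (b : Bool) :
    ConsistentWith V (β ++ [b]) w ↔ (V β < w.length → w.getD (V β) false = b) := by
  have htake : ∀ i ≤ β.length, (β ++ [b]).take i = β.take i := fun i hi =>
    List.take_append_of_le_length hi
  constructor
  · intro h hlt
    have hj : β.length < (β ++ [b]).length := by simp
    have h2 := h β.length hj (by rw [htake _ le_rfl, List.take_length]; exact hlt)
    rw [htake _ le_rfl, List.take_length] at h2
    rw [h2]
    rw [List.getD_eq_getElem _ _ (by simp)]
    simp
  · intro hc j hj hlt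
    simp only [List.length_append, List.length_singleton] at hj
    rcases Nat.lt_or_ge j β.length with h | h
    · rw [htake j h.le] at hlt ⊢
      rw [List.getD_append _ _ _ _ h]
      exact hβ j h hlt
    · have : j = β.length := by omega
      subst this
      rw [htake _ le_rfl, List.take_length] at hlt ⊢
      have hb : (β ++ [b]).getD β.length false = b := by
        rw [List.getD_eq_getElem _ _ (by simp)]
        simp
      rw [hb]
      exact hc hlt

/-- Core counting bound: the missing positions inject into the remaining steps. -/
lemma missing_boundCR (hV : IsScanning V) {g : ℕ → ℕ} (hfill : IsFilling V g)
    {t : ℕ} (ht : g w.length ≤ t) (β : List Bool) (hβ : β.length ≤ t) :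
    w.length - (QsetCR V w β).card ≤ t - β.length ∧
    (w.length ≤ V β → β.length < t →
      w.length - (QsetCR V w β).card ≤ t - β.length - 1) := by
  classical
  set s := β.length with hs
  set α : List Bool := β ++ List.replicate (t - s) false with hα
  have hαlen : α.length = t := by simp [hα, hs]; omega
  have htαβ : ∀ i ≤ s, α.take i = β.take i := fun i hi =>
    List.take_append_of_le_length hi
  have hαs : α.take s = β := by rw [hα, hs]; exact List.take_left
  have hex : ∀ r < w.length, ∃ i, i < t ∧ V (α.take i) = r := by
    intro r hr
    obtain ⟨i, hi, hvi⟩ := hfill w.length (α.take (g w.length))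
      (by rw [List.length_take]; omega) r hr
    refine ⟨i, by omega, ?_⟩
    rwa [List.take_take, min_eq_left hi.le] at hvi
  set M : Finset ℕ := Finset.range w.length \ QsetCR V w β with hM
  have hMcard : M.card = w.length - (QsetCR V w β).card := by
    rw [hM, Finset.card_sdiff_of_subset QsetCR_subset, Finset.card_range]
  set f : ℕ → ℕ := fun r =>
    if h : ∃ i, i < t ∧ V (α.take i) = r then Nat.find h else 0 with hf
  have hfprop : ∀ r ∈ M, f r < t ∧ V (α.take (f r)) = r ∧ s ≤ f r := by
    intro r hr
    rw [hM, Finset.mem_sdiff, Finset.mem_range] at hr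
    have hexr := hex r hr.1
    have h1 : f r < t ∧ V (α.take (f r)) = r := by
      rw [hf]; simp only [hexr, dif_pos]
      exact Nat.find_spec hexr
    refine ⟨h1.1, h1.2, ?_⟩
    by_contra hlt
    push_neg at hlt
    exact hr.2 (mem_QsetCR.mpr ⟨hr.1, f r, by omega,
      by rw [← htαβ (f r) (by omega)]; exact h1.2⟩)
  have hinj : Set.InjOn f ↑M := by
    intro r1 h1 r2 h2 he
    have p1 := (hfprop r1 h1).2.1
    have p2 := (hfprop r2 h2).2.1
    rw [← p1, ← p2, he]
  constructor
  · have := Finset.card_le_card_of_injOn f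
      (fun r hr => Finset.mem_Ico.mpr ⟨(hfprop r hr).2.2, (hfprop r hr).1⟩) hinj
    rw [hMcard, Nat.card_Ico] at this
    exact this
  · intro hVβ hst
    have hmaps : ∀ r ∈ M, f r ∈ (Finset.Ico s t).erase s := by
      intro r hr
      refine Finset.mem_erase.mpr ⟨?_, Finset.mem_Ico.mpr ⟨(hfprop r hr).2.2, (hfprop r hr).1⟩⟩
      intro hfs
      have h2 := (hfprop r hr).2.1
      rw [hfs, hαs] at h2
      rw [hM, Finset.mem_sdiff, Finset.mem_range] at hr
      omega
    have := Finset.card_le_card_of_injOn f hmaps hinj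
    rw [hMcard, Finset.card_erase_of_mem (Finset.mem_Ico.mpr ⟨le_rfl, hst⟩), Nat.card_Ico] at this
    exact this

instance finiteLenCR (k : ℕ) (P : List Bool → Prop) :
    Finite {α : List Bool // α.length = k ∧ P α} := by
  haveI : Finite {α : List Bool // α.length = k} :=
    inferInstanceAs (Finite (List.Vector Bool k))
  exact Finite.of_injective
    (fun x => (⟨x.1, x.2.1⟩ : {α : List Bool // α.length = k}))
    (by rintro ⟨a, _⟩ ⟨b, _⟩ h; simpa [Subtype.ext_iff] using h)

/-- Splitting on the first bit of the extension. -/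
def stepEquivCR (C : List Bool → Prop) (k : ℕ) :
    {α : List Bool // α.length = k + 1 ∧ C α} ≃
      {α : List Bool // α.length = k ∧ C (false :: α)} ⊕
      {α : List Bool // α.length = k ∧ C (true :: α)} where
  toFun := fun x =>
    match x with
    | ⟨[], h⟩ => absurd h.1 (by simp)
    | ⟨false :: as, h⟩ => Sum.inl ⟨as, by simpa using h⟩
    | ⟨true :: as, h⟩ => Sum.inr ⟨as, by simpa using h⟩
  invFun := fun x =>
    match x with
    | Sum.inl ⟨as, h⟩ => ⟨false :: as, by simpa using h⟩
    | Sum.inr ⟨as, h⟩ => ⟨true :: as, by simpa using h⟩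
  left_inv := fun x => by
    match x with
    | ⟨[], h⟩ => exact absurd h.1 (by simp)
    | ⟨false :: as, h⟩ => rfl
    | ⟨true :: as, h⟩ => rfl
  right_inv := fun x => by
    match x with
    | Sum.inl ⟨as, h⟩ => rfl
    | Sum.inr ⟨as, h⟩ => rfl

lemma ext_cardCR (hV : IsScanning V) {g : ℕ → ℕ} (hfill : IsFilling V g)
    {t : ℕ} (ht : g w.length ≤ t) :
    ∀ k, ∀ β : List Bool, β.length + k = t → ConsistentWith V β w →
      Nat.card {α : List Bool // α.length = k ∧ ConsistentWith V (β ++ α) w}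
        = 2 ^ (k - (w.length - (QsetCR V w β).card)) := by
  intro k
  induction k with
  | zero =>
    intro β hst hβ
    have hb := (missing_boundCR hV hfill ht β (by omega)).1
    have h0 : w.length - (QsetCR V w β).card = 0 := by omega
    rw [h0, pow_zero]
    haveI : Unique {α : List Bool // α.length = 0 ∧ ConsistentWith V (β ++ α) w} :=
      { default := ⟨[], rfl, by simpa using hβ⟩
        uniq := fun x => Subtype.ext (List.length_eq_zero_iff.mp x.2.1) }
    exact Nat.card_unique
  | succ k ih =>
    intro β hst hβ
    have hsplit : Nat.card {α : List Bool // α.length = k + 1 ∧ ConsistentWith V (β ++ α) w} =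
        Nat.card {α : List Bool // α.length = k ∧ ConsistentWith V ((β ++ [false]) ++ α) w} +
        Nat.card {α : List Bool // α.length = k ∧ ConsistentWith V ((β ++ [true]) ++ α) w} := by
      rw [Nat.card_congr (stepEquivCR (fun α => ConsistentWith V (β ++ α) w) k), Nat.card_sum]
      congr 1
      · exact Nat.card_congr (Equiv.subtypeEquivRight (fun α => by
          rw [List.append_cons]))
      · exact Nat.card_congr (Equiv.subtypeEquivRight (fun α => by
          rw [List.append_cons]))
    rw [hsplit]
    have hQcard : (QsetCR V w β).card ≤ w.length := by
      have h2 := Finset.card_le_card (QsetCR_subset (V := V) (w := w) (β := β))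
      simpa using h2
    have hbound := (missing_boundCR hV hfill ht β (by omega)).1
    rcases Nat.lt_or_ge (V β) w.length with hqlt | hqge
    · -- forced case
      have hqnot : V β ∉ QsetCR V w β := by
        rw [mem_QsetCR]
        rintro ⟨-, i, hi, hvi⟩
        have hne := scan_neCR hV hi (le_refl β.length)
        rw [List.take_length] at hne
        exact hne hvi
      have hm1 : 1 ≤ w.length - (QsetCR V w β).card := by
        rcases Nat.lt_or_ge (QsetCR V w β).card w.length with h | h
        · omega
        · exfalso
          have heq : QsetCR V w β = Finset.range w.length :=
            Finset.eq_of_subset_of_card_le QsetCR_subset (by simpa using h)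
          exact hqnot (by rw [heq, Finset.mem_range]; exact hqlt)
      have hcard : ∀ b : Bool,
          Nat.card {α : List Bool // α.length = k ∧ ConsistentWith V ((β ++ [b]) ++ α) w}
            = if w.getD (V β) false = b then 2 ^ (k + 1 - (w.length - (QsetCR V w β).card))
              else 0 := by
        intro b
        by_cases hb : w.getD (V β) false = b
        · rw [if_pos hb]
          have hgood : ConsistentWith V (β ++ [b]) w := (cw_snocCR hβ b).mpr (fun _ => hb)
          have hQgood : (QsetCR V w (β ++ [b])).card = (QsetCR V w β).card + 1 := by
            rw [QsetCR_snoc, if_pos hqlt, Finset.card_insert_of_notMem hqnot]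
          rw [ih (β ++ [b]) (by simp; omega) hgood, hQgood]
          congr 1
          omega
        · rw [if_neg hb]
          have hbad : ¬ ConsistentWith V (β ++ [b]) w := by
            rw [cw_snocCR hβ b]
            push_neg
            exact ⟨hqlt, hb⟩
          haveI : IsEmpty {α : List Bool // α.length = k ∧ ConsistentWith V ((β ++ [b]) ++ α) w} :=
            ⟨fun x => hbad (cw_prefixCR x.2.2)⟩
          exact Nat.card_of_isEmpty
      rw [hcard false, hcard true]
      rcases Bool.eq_false_or_eq_true (w.getD (V β) false) with h | h <;> rw [h] <;> simp
    · -- free case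
      have hcons : ∀ b : Bool, ConsistentWith V (β ++ [b]) w :=
        fun b => (cw_snocCR hβ b).mpr (fun h => by omega)
      have hQsame : ∀ b : Bool, QsetCR V w (β ++ [b]) = QsetCR V w β := by
        intro b
        rw [QsetCR_snoc, if_neg (by omega)]
      have hcard : ∀ b : Bool,
          Nat.card {α : List Bool // α.length = k ∧ ConsistentWith V ((β ++ [b]) ++ α) w}
            = 2 ^ (k - (w.length - (QsetCR V w β).card)) := by
        intro b
        rw [ih (β ++ [b]) (by simp; omega) (hcons b), hQsame]
      have hmk : w.length - (QsetCR V w β).card ≤ k := by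
        have := (missing_boundCR hV hfill ht β (by omega)).2 hqge (by omega)
        omega
      rw [hcard false, hcard true]
      rw [← two_mul, ← pow_succ']
      congr 1
      omega

end AuxCR

/-- For a `g`-filling scanning function `V`, a string `w` of length `n`, and `t ≥ g n`,
exactly `2^(t-n)` of the bit strings of length `t` are consistent with `w`. -/
theorem card_consistent_runs (V : List Bool → ℕ) (hV : IsScanning V)
    (g : ℕ → ℕ) (hfill : IsFilling V g)
    (w : List Bool) (n : ℕ) (hw : w.length = n)
    (t : ℕ) (ht : g n ≤ t) :
    Nat.card {α : List Bool // α.length = t ∧ ConsistentWith V α w} = 2 ^ (t - n) := by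
  subst hw
  have hnil : ConsistentWith V [] w := by intro j hj; simp at hj
  have h := ext_cardCR hV hfill ht t [] (by simp) hnil
  have hQnil : QsetCR V w [] = ∅ := by
    ext r; rw [mem_QsetCR]; simp
  rw [hQnil] at h
  simp only [Finset.card_empty, Nat.sub_zero, List.nil_append] at h
  exact h
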